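/- Fix a finite set of 2k distinct integer endpoints partitioned into 'left' points u and 'right' points v with every left point less than every right point. For any function assigning lengths, the signed sum Σ_I (−1)^{c(I)} x^I over all perfect matchings I between the k left points and k right points, with labels α_1,…,α_k ∈ ℤ_{>0} attached to the k intervals and x^I = Π_i x_{α_i}^{v_i − u_i}, vanishes when restricted to labellings in which at least one label is repeated. Here c(I) is the number of crossing pairs (u_i < u_j < v_i < v_j). -/

import Mathlib

theorem mySign_eq (n : ℕ) (τ : Equiv.Perm (Fin n)) : Equiv.Perm.sign τ = Equiv.Perm.signAux τ := by
  refine Equiv.Perm.swap_induction_on τ (by simp [Equiv.Perm.signAux_one]) ?_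
  intro f x y hxy ih
  rw [Equiv.Perm.sign_mul, Equiv.Perm.signAux_mul, ih, Equiv.Perm.sign_swap hxy,
    Equiv.Perm.signAux_swap hxy]

theorem signAux_pow (n : ℕ) (τ : Equiv.Perm (Fin n)) :
    Equiv.Perm.signAux τ =
      (-1 : ℤˣ) ^ ((Finset.univ.filter fun p : Fin n × Fin n =>
        p.1 < p.2 ∧ τ p.2 ≤ τ p.1).card) := by
  unfold Equiv.Perm.signAux
  rw [← Finset.prod_filter_mul_prod_filter_not (Equiv.Perm.finPairsLT n)
    (fun x => τ x.1 ≤ τ x.2)]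
  rw [Finset.prod_congr rfl (fun x hx => if_pos (Finset.mem_filter.mp hx).2),
    Finset.prod_congr rfl (fun x hx => if_neg (Finset.mem_filter.mp hx).2),
    Finset.prod_const, Finset.prod_const_one, mul_one]
  congr 1
  apply Finset.card_bij (fun x _ => (x.2, x.1))
  · rintro ⟨a, b⟩ hx
    simp only [Finset.mem_filter, Equiv.Perm.mem_finPairsLT] at hx ⊢
    exact ⟨Finset.mem_univ _, hx.1, hx.2⟩
  · rintro ⟨a, b⟩ ha ⟨c, d⟩ hc h
    simp only [Prod.mk.injEq] at h
    simp [Sigma.ext_iff, h.1, h.2]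
  · rintro ⟨a, b⟩ hp
    simp only [Finset.mem_filter, Finset.mem_univ, true_and] at hp
    exact ⟨⟨b, a⟩, by simp [Equiv.Perm.mem_finPairsLT, hp.1, hp.2], rfl⟩

/-- The sign of a permutation of `Fin n` in terms of the number of non-inversions. -/
theorem noninv_sign (n : ℕ) (τ : Equiv.Perm (Fin n)) :
    ((-1 : ℤ)) ^ ((Finset.univ.filter fun p : Fin n × Fin n =>
        p.1 < p.2 ∧ τ p.1 < τ p.2).card)
      = (-1 : ℤ) ^ ((Finset.univ.filter fun p : Fin n × Fin n => p.1 < p.2).card)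
        * (Equiv.Perm.sign τ : ℤ) := by
  set cA := (Finset.univ.filter fun p : Fin n × Fin n => p.1 < p.2 ∧ τ p.1 < τ p.2).card with hcA
  set cB := (Finset.univ.filter fun p : Fin n × Fin n => p.1 < p.2 ∧ τ p.2 ≤ τ p.1).card with hcB
  set cC := (Finset.univ.filter fun p : Fin n × Fin n => p.1 < p.2).card with hcC
  have hsign : (Equiv.Perm.sign τ : ℤ) = (-1 : ℤ) ^ cB := by
    rw [mySign_eq, signAux_pow]; push_cast; ring
  have hsum : cA + cB = cC := by
    rw [hcA, hcB, hcC]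
    rw [← Finset.filter_filter (fun p : Fin n × Fin n => p.1 < p.2)
          (fun p => τ p.1 < τ p.2),
        ← Finset.filter_filter (fun p : Fin n × Fin n => p.1 < p.2)
          (fun p => τ p.2 ≤ τ p.1)]
    have : ∀ p : Fin n × Fin n, (τ p.2 ≤ τ p.1) ↔ ¬ (τ p.1 < τ p.2) := by
      intro p; exact not_lt.symm
    rw [Finset.filter_congr (fun p _ => this p)]
    exact Finset.card_filter_add_card_filter_not _
  have h2 : ((-1 : ℤ)) ^ cB * (-1) ^ cB = 1 := by
    rw [← pow_add]; exact Even.neg_one_pow ⟨cB, rfl⟩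
  calc ((-1 : ℤ)) ^ cA = (-1) ^ cA * ((-1) ^ cB * (-1) ^ cB) := by rw [h2, mul_one]
    _ = ((-1) ^ cA * (-1) ^ cB) * (-1) ^ cB := by ring
    _ = (-1) ^ cC * (Equiv.Perm.sign τ : ℤ) := by rw [← pow_add, hsum, hsign]


/-- A rank permutation for an injective function into ℕ. -/
theorem exists_rank_perm (k : ℕ) (u : Fin k → ℕ) (hu : Function.Injective u) :
    ∃ r : Equiv.Perm (Fin k), ∀ i j, r i < r j ↔ u i < u j := by
  have hA : (Finset.univ.image u).card = k := by
    rw [Finset.card_image_of_injective _ hu, Finset.card_univ, Fintype.card_fin]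
  let eu := (Finset.univ.image u).orderIsoOfFin hA
  let fu : Fin k → Fin k := fun i =>
    eu.symm ⟨u i, Finset.mem_image_of_mem u (Finset.mem_univ i)⟩
  have fu_inj : Function.Injective fu := by
    intro i j h
    exact hu (Subtype.ext_iff.mp (eu.symm.injective h))
  refine ⟨Equiv.ofBijective fu (Finite.injective_iff_bijective.mp fu_inj), ?_⟩
  intro i j
  show eu.symm _ < eu.symm _ ↔ _
  rw [OrderIso.lt_iff_lt]
  exact Subtype.mk_lt_mk



/-- Fix `2k` distinct endpoints: left points `u 0, …, u (k-1)`
and right points `v 0, …, v (k-1)`, every left point less than every right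
point.  An interval set is a perfect matching, i.e. a permutation `π` pairing
`u i` with `v (π i)`; its crossing number `c` is the number of pairs `(i, j)`
with `u i < u j < v (π i) < v (π j)`.  Fix a labelling `α` of the intervals
(indexed by their left endpoints) by positive-integer variable indices, with at
least one label repeated (i.e. `α` is not injective).  Then the signed sum over
all matchings of `(-1)^c x^I`, where `x^I = Π_i x_{α i}^{v (π i) - u i}`,
vanishes. -/
theorem repeated_label_signed_sum_vanishes (k : ℕ)
    (u v : Fin k → ℕ)
    (hu : Function.Injective u) (hv : Function.Injective v)
    (huv : ∀ i j, u i < v j)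
    (α : Fin k → ℕ) (hα : ¬ Function.Injective α) :
    ∑ π : Equiv.Perm (Fin k),
      ((-1 : ℤ) ^ (Finset.univ.filter fun p : Fin k × Fin k =>
          u p.1 < u p.2 ∧ u p.2 < v (π p.1) ∧ v (π p.1) < v (π p.2)).card)
        • ∏ i, (MvPolynomial.X (α i) : MvPolynomial ℕ ℤ) ^ (v (π i) - u i)
      = 0 := by
  obtain ⟨a, b, hαab, hab⟩ := Function.not_injective_iff.mp hα
  obtain ⟨ru, hru⟩ := exists_rank_perm k u hu
  obtain ⟨rv, hrv⟩ := exists_rank_perm k v hv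
  -- the count in the statement equals the non-inversion count of the conjugated permutation
  have hcount : ∀ π : Equiv.Perm (Fin k),
      (Finset.univ.filter fun p : Fin k × Fin k =>
          u p.1 < u p.2 ∧ u p.2 < v (π p.1) ∧ v (π p.1) < v (π p.2)).card
      = (Finset.univ.filter fun p : Fin k × Fin k =>
          p.1 < p.2 ∧ ((ru.symm.trans π).trans rv) p.1 < ((ru.symm.trans π).trans rv) p.2).card := by
    intro π
    apply Finset.card_bij (fun p _ => (ru p.1, ru p.2))
    · rintro ⟨i, j⟩ hp
      simp only [Finset.mem_filter, Finset.mem_univ, true_and] at hp ⊢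
      simp only [Equiv.trans_apply, Equiv.symm_apply_apply] at hp ⊢
      exact ⟨(hru i j).mpr hp.1, (hrv _ _).mpr hp.2.2⟩
    · rintro ⟨i, j⟩ _ ⟨i', j'⟩ _ h
      simp only [Prod.mk.injEq] at h
      simp [ru.injective h.1, ru.injective h.2]
    · rintro ⟨i, j⟩ hp
      simp only [Finset.mem_filter, Finset.mem_univ, true_and] at hp
      simp only [Equiv.trans_apply] at hp
      refine ⟨(ru.symm i, ru.symm j), ?_, by simp⟩
      simp only [Finset.mem_filter, Finset.mem_univ, true_and]
      refine ⟨(hru _ _).mp (by simpa using hp.1), huv _ _, (hrv _ _).mp hp.2⟩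
  -- rewrite each sign
  have hsign : ∀ π : Equiv.Perm (Fin k),
      ((-1 : ℤ) ^ (Finset.univ.filter fun p : Fin k × Fin k =>
          u p.1 < u p.2 ∧ u p.2 < v (π p.1) ∧ v (π p.1) < v (π p.2)).card)
      = ((-1 : ℤ) ^ ((Finset.univ.filter fun p : Fin k × Fin k => p.1 < p.2).card)
          * (Equiv.Perm.sign rv : ℤ) * (Equiv.Perm.sign ru : ℤ)) * (Equiv.Perm.sign π : ℤ) := by
    intro π
    rw [hcount π, noninv_sign]
    have : Equiv.Perm.sign ((ru.symm.trans π).trans rv)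
        = Equiv.Perm.sign rv * Equiv.Perm.sign π * Equiv.Perm.sign ru := by
      rw [Equiv.Perm.sign_trans, Equiv.Perm.sign_trans, Equiv.Perm.sign_symm, mul_assoc]
    rw [this]; push_cast; ring
  calc ∑ π : Equiv.Perm (Fin k),
      ((-1 : ℤ) ^ (Finset.univ.filter fun p : Fin k × Fin k =>
          u p.1 < u p.2 ∧ u p.2 < v (π p.1) ∧ v (π p.1) < v (π p.2)).card)
        • ∏ i, (MvPolynomial.X (α i) : MvPolynomial ℕ ℤ) ^ (v (π i) - u i)
      = ((-1 : ℤ) ^ ((Finset.univ.filter fun p : Fin k × Fin k => p.1 < p.2).card)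
          * (Equiv.Perm.sign rv : ℤ) * (Equiv.Perm.sign ru : ℤ)) •
        ∑ π : Equiv.Perm (Fin k), (Equiv.Perm.sign π : ℤ)
          • ∏ i, (MvPolynomial.X (α i) : MvPolynomial ℕ ℤ) ^ (v (π i) - u i) := by
        rw [Finset.smul_sum]
        exact Finset.sum_congr rfl fun π _ => by rw [hsign π, mul_smul]
    _ = 0 := by
        rw [smul_eq_zero]
        right
        apply Finset.sum_ninvolution (fun π => π * Equiv.swap a b)
        · intro π
          have hs : ((Equiv.Perm.sign (π * Equiv.swap a b) : ℤ)) = -(Equiv.Perm.sign π : ℤ) := by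
            rw [Equiv.Perm.sign_mul, Equiv.Perm.sign_swap hab]; push_cast; ring
          have hb : b ∈ Finset.univ.erase a := Finset.mem_erase.mpr ⟨fun h => hab h.symm, Finset.mem_univ b⟩
          have hprod : ∏ i, (MvPolynomial.X (α i) : MvPolynomial ℕ ℤ) ^ (v ((π * Equiv.swap a b) i) - u i)
              = ∏ i, (MvPolynomial.X (α i) : MvPolynomial ℕ ℤ) ^ (v (π i) - u i) := by
            rw [← Finset.mul_prod_erase Finset.univ _ (Finset.mem_univ a),
                ← Finset.mul_prod_erase _ _ hb,
                ← Finset.mul_prod_erase Finset.univ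
                  (fun i => (MvPolynomial.X (α i) : MvPolynomial ℕ ℤ) ^ (v (π i) - u i))
                  (Finset.mem_univ a),
                ← Finset.mul_prod_erase _ _ hb]
            have htail : ∀ i ∈ (Finset.univ.erase a).erase b,
                (MvPolynomial.X (α i) : MvPolynomial ℕ ℤ) ^ (v ((π * Equiv.swap a b) i) - u i)
                = (MvPolynomial.X (α i) : MvPolynomial ℕ ℤ) ^ (v (π i) - u i) := by
              intro i hi
              rw [Finset.mem_erase, Finset.mem_erase] at hi
              rw [Equiv.Perm.mul_apply, Equiv.swap_apply_of_ne_of_ne hi.2.1 hi.1]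
            rw [Finset.prod_congr rfl htail, ← mul_assoc, ← mul_assoc]
            congr 1
            simp only [Equiv.Perm.mul_apply, Equiv.swap_apply_left, Equiv.swap_apply_right]
            rw [hαab, ← pow_add, ← pow_add]
            congr 1
            have h1 := huv a (π a); have h2 := huv a (π b)
            have h3 := huv b (π a); have h4 := huv b (π b)
            omega
          rw [hs, hprod, neg_smul, add_neg_cancel]
        · intro π _ h
          exact hab (Equiv.swap_eq_one_iff.mp (by rwa [mul_eq_left] at h))
        · intro π; exact Finset.mem_univ _
        · intro π; rw [mul_assoc, Equiv.swap_mul_self, mul_one]
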